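/- Suppose the dilution map Λ_{d;ρ̃,ω}(X) = ρ̃·Tr[XΦ_d] + ω·Tr[X(𝟙−Φ_d)] satisfies the δ-approximate non-entangling conditions ω ≤ (1+δ)σ₁ and (1/d)ρ̃ + ((d−1)/d)ω ≤ (1+δ)σ₂ for separable σ₁, σ₂. Then with d' = 2d and ω' = (1/d')ρ̃ + ((d'−1)/d')ω, the map Λ_{d';ρ̃,ω'} is δ-approximately dually non-entangling: there exist separable σ₁', σ₂' with ω' ≤ (1+δ)σ₁', (1/d')ρ̃ + ((d'−1)/d')ω' ≤ (1+δ)σ₂', and additionally ρ̃ ≤ (d'+1)ω'. -/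

import Mathlib

open Matrix BigOperators
open scoped Kronecker ComplexOrder

noncomputable section

abbrev BOp (d : ℕ) := Matrix (Fin d × Fin d) (Fin d × Fin d) ℂ

/-- Loewner order: `A ≤ B` iff `B - A` is positive semidefinite. -/
def loe {n : Type*} [Fintype n] (A B : Matrix n n ℂ) : Prop := (B - A).PosSemidef

/-- A density operator: positive semidefinite with unit trace. -/
def IsState {n : Type*} [Fintype n] [DecidableEq n] (ρ : Matrix n n ℂ) : Prop :=
  ρ.PosSemidef ∧ ρ.trace = 1

/-- Separable bipartite state (convex combination of product states). -/
def IsSep {a b : Type*} [Fintype a] [DecidableEq a] [Fintype b] [DecidableEq b]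
    (ρ : Matrix (a × b) (a × b) ℂ) : Prop :=
  ∃ (m : ℕ) (p : Fin m → ℝ) (A : Fin m → Matrix a a ℂ) (B : Fin m → Matrix b b ℂ),
    (∀ i, 0 ≤ p i) ∧ (∑ i, p i) = 1 ∧
    (∀ i, IsState (A i)) ∧ (∀ i, IsState (B i)) ∧
    ρ = ∑ i, ((p i : ℝ) : ℂ) • (A i ⊗ₖ B i)

/-- The cone generated by separable states. -/
def InSepCone {a b : Type*} [Fintype a] [DecidableEq a] [Fintype b] [DecidableEq b]
    (S : Matrix (a × b) (a × b) ℂ) : Prop :=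
  ∃ (c : ℝ) (σ : Matrix (a × b) (a × b) ℂ), 0 ≤ c ∧ IsSep σ ∧ S = ((c : ℝ) : ℂ) • σ

/-- Maximally entangled state `Φ_d` on `ℂ^d ⊗ ℂ^d`. -/
def PhiME (d : ℕ) : BOp d := fun p q => if p.1 = p.2 ∧ q.1 = q.2 then ((1 : ℂ) / d) else 0

/-- `τ_d = (𝟙 - Φ_d)/(d² - 1)`. -/
def tauME (d : ℕ) : BOp d := (((d : ℂ)^2 - 1))⁻¹ • (1 - PhiME d)

/-- Partial transpose on the second tensor factor. -/
def pt {a b : Type*} (A : Matrix (a × b) (a × b) ℂ) : Matrix (a × b) (a × b) ℂ :=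
  fun p q => A (p.1, q.2) (q.1, p.2)

/-- Total positive-semidefinite square root (junk value `0` off the PSD cone). -/
noncomputable def msqrt {n : Type*} [Fintype n] [DecidableEq n] (A : Matrix n n ℂ) :
    Matrix n n ℂ :=
  open scoped Classical in
  if h : A.PosSemidef then (h.1.eigenvectorUnitary : Matrix n n ℂ) *
    diagonal ((↑) ∘ (√·) ∘ h.1.eigenvalues) * (star (h.1.eigenvectorUnitary : Matrix n n ℂ)) else 0

/-- Trace norm `‖A‖₁ = Tr √(AᴴA)`. -/
noncomputable def traceNorm {n : Type*} [Fintype n] [DecidableEq n] (A : Matrix n n ℂ) : ℝ :=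
  (msqrt (Aᴴ * A)).trace.re



lemma psd_rsmul {n : Type*} [Fintype n] {A : Matrix n n ℂ} (hA : A.PosSemidef)
    {c : ℝ} (hc : 0 ≤ c) : (((c : ℝ) : ℂ) • A).PosSemidef := by
  constructor
  · have : (((c : ℝ) : ℂ) • A)ᴴ = ((c : ℝ) : ℂ) • A := by
      rw [conjTranspose_smul, hA.1.eq]
      simp
    exact this
  · exact (hA.smul (show (0:ℂ) ≤ ((c : ℝ) : ℂ) by exact_mod_cast hc)).2

lemma isSep_comb {a b : Type*} [Fintype a] [DecidableEq a] [Fintype b] [DecidableEq b]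
    {σ τ : Matrix (a × b) (a × b) ℂ} (hσ : IsSep σ) (hτ : IsSep τ)
    {s t : ℝ} (hs : 0 ≤ s) (ht : 0 ≤ t) (hst : s + t = 1) :
    IsSep (((s : ℝ) : ℂ) • σ + ((t : ℝ) : ℂ) • τ) := by
  obtain ⟨m, p, A, B, hp, hps, hA, hB, rfl⟩ := hσ
  obtain ⟨m', p', A', B', hp', hps', hA', hB', rfl⟩ := hτ
  refine ⟨m + m', Fin.append (fun i => s * p i) (fun i => t * p' i),
    Fin.append A A', Fin.append B B', ?_, ?_, ?_, ?_, ?_⟩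
  · intro i
    refine Fin.addCases (fun j => ?_) (fun j => ?_) i
    · simpa using mul_nonneg hs (hp j)
    · simpa using mul_nonneg ht (hp' j)
  · rw [Fin.sum_univ_add]
    simp only [Fin.append_left, Fin.append_right, ← Finset.mul_sum, hps, hps']
    linarith
  · intro i
    refine Fin.addCases (fun j => ?_) (fun j => ?_) i
    · simpa using hA j
    · simpa using hA' j
  · intro i
    refine Fin.addCases (fun j => ?_) (fun j => ?_) i
    · simpa using hB j
    · simpa using hB' j
  · rw [Fin.sum_univ_add]
    simp only [Fin.append_left, Fin.append_right, Finset.smul_sum, smul_smul]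
    push_cast
    ring_nf

theorem stmt15 {a b : Type*} [Fintype a] [DecidableEq a] [Fintype b] [DecidableEq b]
    (d : ℕ) (hd : 1 ≤ d) (δ : ℝ) (hδ : 0 ≤ δ)
    (rt om σ₁ σ₂ : Matrix (a × b) (a × b) ℂ)
    (hrt : IsState rt) (hom : IsState om)
    (hσ₁ : IsSep σ₁) (hσ₂ : IsSep σ₂)
    (h1 : loe om (((1 + δ : ℝ) : ℂ) • σ₁))
    (h2 : loe ((((1 : ℝ) / d : ℝ) : ℂ) • rt + ((((d : ℝ) - 1) / d : ℝ) : ℂ) • om)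
      (((1 + δ : ℝ) : ℂ) • σ₂)) :
    ∃ σ₁' σ₂' : Matrix (a × b) (a × b) ℂ, IsSep σ₁' ∧ IsSep σ₂' ∧
      loe ((((1 : ℝ) / (2 * d) : ℝ) : ℂ) • rt +
            (((2 * (d : ℝ) - 1) / (2 * d) : ℝ) : ℂ) • om)
          (((1 + δ : ℝ) : ℂ) • σ₁') ∧
      loe ((((1 : ℝ) / (2 * d) : ℝ) : ℂ) • rt +
            (((2 * (d : ℝ) - 1) / (2 * d) : ℝ) : ℂ) •
              ((((1 : ℝ) / (2 * d) : ℝ) : ℂ) • rt +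
               (((2 * (d : ℝ) - 1) / (2 * d) : ℝ) : ℂ) • om))
          (((1 + δ : ℝ) : ℂ) • σ₂') ∧
      loe rt (((2 * (d : ℝ) + 1 : ℝ) : ℂ) •
          ((((1 : ℝ) / (2 * d) : ℝ) : ℂ) • rt +
           (((2 * (d : ℝ) - 1) / (2 * d) : ℝ) : ℂ) • om)) := by
  have hd1 : (1:ℝ) ≤ (d:ℝ) := by exact_mod_cast hd
  have hd0 : (d : ℂ) ≠ 0 := by
    exact_mod_cast (Nat.pos_of_ne_zero (by omega)).ne'
  have hD2 : ((((1 + δ : ℝ) : ℂ) • σ₂) -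
      ((((1 : ℝ) / d : ℝ) : ℂ) • rt + ((((d : ℝ) - 1) / d : ℝ) : ℂ) • om)).PosSemidef := h2
  have hD1 : ((((1 + δ : ℝ) : ℂ) • σ₁) - om).PosSemidef := h1
  have hq1 : (0:ℝ) ≤ 1/(4*(d:ℝ)) := by positivity
  have hq2 : (0:ℝ) ≤ 1 - 1/(4*(d:ℝ)) := by
    have : (1:ℝ)/(4*(d:ℝ)) ≤ 1 := by
      rw [div_le_one (by linarith)]; linarith
    linarith
  refine ⟨((1/2 : ℝ) : ℂ) • σ₂ + ((1/2 : ℝ) : ℂ) • σ₁,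
    (((1 - 1/(4*(d:ℝ)) : ℝ)) : ℂ) • σ₂ + (((1/(4*(d:ℝ)) : ℝ)) : ℂ) • σ₁,
    isSep_comb hσ₂ hσ₁ (by norm_num) (by norm_num) (by norm_num),
    isSep_comb hσ₂ hσ₁ hq2 hq1 (by ring), ?_, ?_, ?_⟩
  · show Matrix.PosSemidef _
    have key : (((1 + δ : ℝ) : ℂ) • (((1/2 : ℝ) : ℂ) • σ₂ + ((1/2 : ℝ) : ℂ) • σ₁)) -
        ((((1 : ℝ) / (2 * d) : ℝ) : ℂ) • rt + (((2 * (d : ℝ) - 1) / (2 * d) : ℝ) : ℂ) • om)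
        = ((1/2 : ℝ) : ℂ) • ((((1 + δ : ℝ) : ℂ) • σ₂) -
            ((((1 : ℝ) / d : ℝ) : ℂ) • rt + ((((d : ℝ) - 1) / d : ℝ) : ℂ) • om))
          + ((1/2 : ℝ) : ℂ) • ((((1 + δ : ℝ) : ℂ) • σ₁) - om) := by
      match_scalars <;> field_simp <;> ring
    rw [key]
    exact (psd_rsmul hD2 (by norm_num)).add (psd_rsmul hD1 (by norm_num))
  · show Matrix.PosSemidef _
    have key : (((1 + δ : ℝ) : ℂ) •
          ((((1 - 1/(4*(d:ℝ)) : ℝ)) : ℂ) • σ₂ + (((1/(4*(d:ℝ)) : ℝ)) : ℂ) • σ₁)) -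
        ((((1 : ℝ) / (2 * d) : ℝ) : ℂ) • rt +
          (((2 * (d : ℝ) - 1) / (2 * d) : ℝ) : ℂ) •
            ((((1 : ℝ) / (2 * d) : ℝ) : ℂ) • rt +
             (((2 * (d : ℝ) - 1) / (2 * d) : ℝ) : ℂ) • om))
        = (((1 - 1/(4*(d:ℝ)) : ℝ)) : ℂ) • ((((1 + δ : ℝ) : ℂ) • σ₂) -
            ((((1 : ℝ) / d : ℝ) : ℂ) • rt + ((((d : ℝ) - 1) / d : ℝ) : ℂ) • om))
          + (((1/(4*(d:ℝ)) : ℝ)) : ℂ) • ((((1 + δ : ℝ) : ℂ) • σ₁) - om) := by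
      match_scalars <;> field_simp <;> ring
    rw [key]
    exact (psd_rsmul hD2 hq2).add (psd_rsmul hD1 hq1)
  · show Matrix.PosSemidef _
    have key : (((2 * (d : ℝ) + 1 : ℝ) : ℂ) •
          ((((1 : ℝ) / (2 * d) : ℝ) : ℂ) • rt +
           (((2 * (d : ℝ) - 1) / (2 * d) : ℝ) : ℂ) • om)) - rt
        = (((1/(2*(d:ℝ)) : ℝ)) : ℂ) • rt +
          ((((4*(d:ℝ)^2 - 1)/(2*(d:ℝ)) : ℝ)) : ℂ) • om := by
      match_scalars <;> field_simp <;> ring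
    rw [key]
    have h4 : (0:ℝ) ≤ (4*(d:ℝ)^2 - 1)/(2*(d:ℝ)) := by
      apply div_nonneg _ (by linarith)
      nlinarith
    exact (psd_rsmul hrt.1 (by positivity)).add (psd_rsmul hom.1 h4)


end
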